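/- Let R be a ring and M an almost V-module. Then for every module N ∈ σ(M), the Jacobson radical J(N) is a semisimple module. -/

import Mathlib

universe u v w

section Defs

variable (A : Type u) [Ring A]

/-- The radical of a module: the intersection of all maximal submodules
(`⊤` if there are none). -/
def modRad (M : Type w) [AddCommGroup M] [Module A M] : Submodule A M :=
  sInf {P : Submodule A M | IsCoatom P}

/-- The socle of a module: the sum of all simple submodules. -/
def modSocle (M : Type w) [AddCommGroup M] [Module A M] : Submodule A M :=
  sSup {S : Submodule A M | IsAtom S}

/-- A submodule `N` of `M` is small if `N ⊔ K = ⊤` implies `K = ⊤`. -/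
def IsSmallSubmodule {M : Type w} [AddCommGroup M] [Module A M] (N : Submodule A M) : Prop :=
  ∀ K : Submodule A M, N ⊔ K = ⊤ → K = ⊤

/-- `N` is a direct summand of `M`. -/
def IsDirectSummand {M : Type w} [AddCommGroup M] [Module A M] (N : Submodule A M) : Prop :=
  ∃ N' : Submodule A M, IsCompl N N'

/-- `N` is an essential submodule of `M`. -/
def IsEssentialSubmodule {M : Type w} [AddCommGroup M] [Module A M] (N : Submodule A M) : Prop :=
  ∀ K : Submodule A M, K ≠ ⊥ → N ⊓ K ≠ ⊥

/-- An `I₀`-module: every non-small submodule contains a nonzero direct summand. -/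
def IsI0Module (M : Type w) [AddCommGroup M] [Module A M] : Prop :=
  ∀ N : Submodule A M, ¬ IsSmallSubmodule A N →
    ∃ D : Submodule A M, D ≠ ⊥ ∧ D ≤ N ∧ IsDirectSummand A D

/-- A `V`-module: every proper submodule is an intersection of maximal submodules. -/
def IsVModule (M : Type w) [AddCommGroup M] [Module A M] : Prop :=
  ∀ N : Submodule A M, N ≠ ⊤ →
    ∃ S : Set (Submodule A M), (∀ P ∈ S, IsCoatom P) ∧ N = sInf S

/-- A local module: it has a proper submodule containing every proper submodule. -/
def IsLocalModule (M : Type w) [AddCommGroup M] [Module A M] : Prop :=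
  ∃ P : Submodule A M, P ≠ ⊤ ∧ ∀ K : Submodule A M, K ≠ ⊤ → K ≤ P

/-- A module of composition length two: it has a submodule which is simultaneously an atom
and a coatom of its submodule lattice, i.e. a composition series `0 ⋖ S ⋖ M`. -/
def HasLengthTwo (M : Type w) [AddCommGroup M] [Module A M] : Prop :=
  ∃ S : Submodule A M, IsAtom S ∧ IsCoatom S

/-- A uniform module: nonzero, and any two nonzero submodules intersect nontrivially. -/
def IsUniformModule (M : Type w) [AddCommGroup M] [Module A M] : Prop :=
  Nontrivial M ∧ ∀ K L : Submodule A M, K ≠ ⊥ → L ≠ ⊥ → K ⊓ L ≠ ⊥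

/-- A uniserial module: submodules are linearly ordered by inclusion. -/
def IsUniserialModule (M : Type w) [AddCommGroup M] [Module A M] : Prop :=
  ∀ K L : Submodule A M, K ≤ L ∨ L ≤ K

/-- A semiartinian module: every nonzero quotient has a nonzero socle. -/
def IsSemiartinianModule (M : Type w) [AddCommGroup M] [Module A M] : Prop :=
  ∀ N : Submodule A M, N ≠ ⊤ → modSocle A (M ⧸ N) ≠ ⊥

/-- `U` is `M`-injective: homomorphisms from submodules of `M` to `U` extend to `M`. -/
def RelInjective (M : Type v) (U : Type w) [AddCommGroup M] [Module A M]
    [AddCommGroup U] [Module A U] : Prop :=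
  ∀ (K : Submodule A M) (f : K →ₗ[A] U), ∃ g : M →ₗ[A] U, ∀ x : K, g (x : M) = f x

/-- `P` is `M`-projective: homomorphisms from `P` to quotients of `M` lift to `M`. -/
def RelProjective (M : Type v) (P : Type w) [AddCommGroup M] [Module A M]
    [AddCommGroup P] [Module A P] : Prop :=
  ∀ (K : Submodule A M) (f : P →ₗ[A] M ⧸ K), ∃ h : P →ₗ[A] M, ∀ x : P, K.mkQ (h x) = f x

/-- `M` is almost `N`-projective. -/
def AlmostNProjective (M : Type v) (N : Type w) [AddCommGroup M] [Module A M]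
    [AddCommGroup N] [Module A N] : Prop :=
  ∀ (K : Submodule A N) (f : M →ₗ[A] N ⧸ K),
    (∃ h : M →ₗ[A] N, ∀ x : M, K.mkQ (h x) = f x) ∨
    (∃ N' : Submodule A N, N' ≠ ⊥ ∧ IsDirectSummand A N' ∧
      ∃ h' : N' →ₗ[A] M, ∀ x : N', K.mkQ (x : N) = f (h' x))

/-- `M` is almost projective: almost `N`-projective for every module `N`. -/
def IsAlmostProjective (M : Type w) [AddCommGroup M] [Module A M] : Prop :=
  ∀ (N : Type v) [AddCommGroup N] [Module A N], AlmostNProjective A M N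

/-- `M` is almost `N`-injective. -/
def AlmostNInjective (M : Type v) (N : Type w) [AddCommGroup M] [Module A M]
    [AddCommGroup N] [Module A N] : Prop :=
  ∀ (N₀ : Submodule A N) (f : N₀ →ₗ[A] M),
    (∃ g : N →ₗ[A] M, ∀ x : N₀, g (x : N) = f x) ∨
    (∃ π : Module.End A N, IsIdempotentElem π ∧ π ≠ 0 ∧
      ∃ h : M →ₗ[A] LinearMap.range π, ∀ x : N₀, (↑(h (f x)) : N) = π (x : N))

/-- `M` is almost injective: almost `N`-injective for every module `N`. -/
def IsAlmostInjective (M : Type w) [AddCommGroup M] [Module A M] : Prop :=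
  ∀ (N : Type v) [AddCommGroup N] [Module A N], AlmostNInjective A M N

/-- `N` belongs to `σ(M)`: `N` is isomorphic to a submodule of a quotient of a direct sum
of copies of `M`. -/
def InSigma (M : Type v) [AddCommGroup M] [Module A M]
    (N : Type w) [AddCommGroup N] [Module A N] : Prop :=
  ∃ (ι : Type v) (K : Submodule A (ι →₀ M)) (P : Submodule A ((ι →₀ M) ⧸ K)),
    Nonempty (N ≃ₗ[A] P)

/-- `P` is a projective object of the category `σ(M)`. -/
def ProjInSigma (M : Type v) [AddCommGroup M] [Module A M]
    (P : Type w) [AddCommGroup P] [Module A P] : Prop :=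
  InSigma A M P ∧
  ∀ (X Y : Type v) [AddCommGroup X] [Module A X] [AddCommGroup Y] [Module A Y],
    InSigma A M X → InSigma A M Y →
    ∀ (g : X →ₗ[A] Y), Function.Surjective g →
    ∀ f : P →ₗ[A] Y, ∃ h : P →ₗ[A] X, ∀ x : P, g (h x) = f x

/-- `M` is an almost `V`-module: every simple module is almost `N`-injective
for every `N ∈ σ(M)`. -/
def IsAlmostVModule (M : Type v) [AddCommGroup M] [Module A M] : Prop :=
  ∀ (S : Type v) [AddCommGroup S] [Module A S], IsSimpleModule A S →
    ∀ (N : Type v) [AddCommGroup N] [Module A N], InSigma A M N → AlmostNInjective A S N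

end Defs

section Aux

open Submodule

variable {A : Type u} [Ring A]

/-- Zorn: there is a maximal submodule disjoint from `K`. -/
lemma aux_exists_maximal_disjoint {W : Type w} [AddCommGroup W] [Module A W]
    (K : Submodule A W) :
    ∃ C : Submodule A W, Maximal (fun C : Submodule A W => C ⊓ K = ⊥) C := by
  apply zorn_le₀ {C : Submodule A W | C ⊓ K = ⊥}
  intro c hc hchain
  rcases c.eq_empty_or_nonempty with rfl | hne
  · exact ⟨⊥, by simp, by simp⟩
  · refine ⟨sSup c, ?_, fun z hz => le_sSup hz⟩
    rw [Set.mem_setOf_eq, eq_bot_iff]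
    intro z hz
    obtain ⟨hz1, hz2⟩ := Submodule.mem_inf.mp hz
    obtain ⟨p, hp, hzp⟩ := (Submodule.mem_sSup_of_directed hne hchain.directedOn).mp hz1
    have : z ∈ p ⊓ K := ⟨hzp, hz2⟩
    rw [hc hp] at this
    exact this

/-- Zorn: extend `E` to a submodule maximal with respect to avoiding `x`. -/
lemma aux_exists_maximal_avoiding {W : Type w} [AddCommGroup W] [Module A W]
    (E : Submodule A W) (x : W) (hx : x ∉ E) :
    ∃ L : Submodule A W, E ≤ L ∧ x ∉ L ∧ ∀ P, L < P → x ∈ P := by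
  have hchaincond : ∀ c ⊆ {P : Submodule A W | E ≤ P ∧ x ∉ P}, IsChain (· ≤ ·) c →
      ∀ y ∈ c, ∃ ub ∈ {P : Submodule A W | E ≤ P ∧ x ∉ P}, ∀ z ∈ c, z ≤ ub := by
    intro c hc hchain y hy
    refine ⟨sSup c, ⟨le_trans (hc hy).1 (le_sSup hy), ?_⟩, fun z hz => le_sSup hz⟩
    intro hxs
    obtain ⟨p, hp, hxp⟩ :=
      (Submodule.mem_sSup_of_directed ⟨y, hy⟩ hchain.directedOn).mp hxs
    exact (hc hp).2 hxp
  obtain ⟨L, hEL, hL⟩ :=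
    zorn_le_nonempty₀ {P : Submodule A W | E ≤ P ∧ x ∉ P} hchaincond E ⟨le_rfl, hx⟩
  refine ⟨L, hL.1.1, hL.1.2, fun P hP => ?_⟩
  by_contra hxP
  exact hP.2 (hL.2 ⟨le_trans hL.1.1 hP.1, hxP⟩ hP.1)

/-- In a non-semisimple module with a generator, there is a proper "maximal" submodule which is
essential. -/
lemma aux_bad_coatom {W : Type w} [AddCommGroup W] [Module A W] (x : W)
    (hgen : Submodule.span A {x} = ⊤) (hns : ¬ IsSemisimpleModule A W) :
    ∃ L : Submodule A W, x ∉ L ∧ (∀ P, L < P → P = ⊤) ∧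
      ∀ K : Submodule A W, K ≠ ⊥ → L ⊓ K ≠ ⊥ := by
  have hex : ∃ K' : Submodule A W, ∀ C, ¬ IsCompl K' C := by
    by_contra hcon
    push_neg at hcon
    haveI : ComplementedLattice (Submodule A W) := ⟨fun a => hcon a⟩
    exact hns ⟨⟩
  obtain ⟨K', hK'⟩ := hex
  obtain ⟨C', hC'⟩ := aux_exists_maximal_disjoint K'
  have hCK : C' ⊓ K' = ⊥ := hC'.1
  set E := K' ⊔ C' with hE
  have hEtop : E ≠ ⊤ := by
    intro h
    exact hK' C'
      (isCompl_iff.mpr ⟨disjoint_iff.mpr (by rw [inf_comm]; exact hCK),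
        codisjoint_iff.mpr h⟩)
  have hEess : ∀ D : Submodule A W, D ≠ ⊥ → E ⊓ D ≠ ⊥ := by
    intro D hD hbot
    have hdis : (C' ⊔ D) ⊓ K' = ⊥ := by
      rw [eq_bot_iff]
      intro a ha
      obtain ⟨ha1, ha2⟩ := Submodule.mem_inf.mp ha
      obtain ⟨cc, hcc, d, hd, rfl⟩ := Submodule.mem_sup.mp ha1
      have hdE : d ∈ E ⊓ D := by
        refine ⟨?_, hd⟩
        have h1 : cc + d ∈ E := le_sup_left (a := K') (b := C') ha2
        have h2 : cc ∈ E := le_sup_right (a := K') (b := C') hcc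
        have := E.sub_mem h1 h2
        simpa using this
      rw [hbot] at hdE
      have hd0 : d = 0 := hdE
      have : cc ∈ C' ⊓ K' := ⟨hcc, by simpa [hd0] using ha2⟩
      rw [hCK] at this
      simp [hd0, this]
    have hDC : D ≤ C' := le_trans le_sup_right (hC'.2 hdis le_sup_left)
    apply hD
    rw [eq_bot_iff, ← hbot]
    exact le_inf (le_trans hDC le_sup_right) le_rfl
  have hxE : x ∉ E := by
    intro h
    apply hEtop
    rw [eq_top_iff, ← hgen]
    exact Submodule.span_le.mpr (by simpa using h)
  obtain ⟨L, hEL, hxL, hLmax⟩ := aux_exists_maximal_avoiding E x hxE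
  refine ⟨L, hxL, fun P hP => ?_, fun K hK hbot => ?_⟩
  · rw [eq_top_iff, ← hgen]
    exact Submodule.span_le.mpr (by simpa using hLmax P hP)
  · apply hEess K hK
    rw [eq_bot_iff, ← hbot]
    exact inf_le_inf_right K hEL

/-- The radical maps into the radical under a surjective linear map. -/
lemma aux_modRad_map {N Q : Type w} [AddCommGroup N] [Module A N]
    [AddCommGroup Q] [Module A Q] (q : N →ₗ[A] Q) (hq : Function.Surjective q)
    {x : N} (hx : x ∈ modRad A N) : q x ∈ modRad A Q := by
  have hx' : ∀ P ∈ {P : Submodule A N | IsCoatom P}, x ∈ P := Submodule.mem_sInf.mp hx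
  apply Submodule.mem_sInf.mpr
  intro P hP
  have hker : LinearMap.ker q ≤ P.comap q := by
    intro z hz
    rw [Submodule.mem_comap, LinearMap.mem_ker.mp hz]
    exact P.zero_mem
  have hco : IsCoatom (P.comap q) := by
    constructor
    · intro htop
      obtain ⟨z, hz⟩ : ∃ z, z ∉ P := by
        by_contra hcon
        push_neg at hcon
        exact hP.1 (Submodule.eq_top_iff'.mpr hcon)
      obtain ⟨a, rfl⟩ := hq z
      exact hz (by have : a ∈ P.comap q := htop ▸ Submodule.mem_top; exact this)
    · intro P' hP'
      have hkerP' : LinearMap.ker q ≤ P' := le_trans hker hP'.le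
      have hcm : Submodule.comap q (Submodule.map q P') = P' := by
        rw [Submodule.comap_map_eq, sup_eq_left.mpr hkerP']
      have h1 : P ≤ Submodule.map q P' := by
        rw [← Submodule.map_comap_eq_of_surjective hq P]
        exact Submodule.map_mono hP'.le
      have h2 : Submodule.map q P' ≠ P := by
        intro h
        have := congrArg (Submodule.comap q) h
        rw [hcm] at this
        exact hP'.ne' this
      have h3 : Submodule.map q P' = ⊤ := hP.2 _ (lt_of_le_of_ne h1 (Ne.symm h2))
      have := congrArg (Submodule.comap q) h3
      rw [hcm, Submodule.comap_top] at this
      exact this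
  exact hx' _ hco

/-- `σ(M)` is closed under quotients. -/
lemma aux_inSigma_quotient {M N : Type v} [AddCommGroup M] [Module A M]
    [AddCommGroup N] [Module A N] (h : InSigma A M N) (C : Submodule A N) :
    InSigma A M (N ⧸ C) := by
  obtain ⟨ι, K, P, ⟨e⟩⟩ := h
  set C₁ : Submodule A ↥P := C.map (e : N →ₗ[A] ↥P) with hC₁
  set C₂ : Submodule A ((ι →₀ M) ⧸ K) := C₁.map P.subtype with hC₂
  set K₂ : Submodule A (ι →₀ M) := C₂.comap K.mkQ with hK₂
  have hKK₂ : K ≤ K₂ := by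
    intro z hz
    have : K.mkQ z = 0 := (Submodule.Quotient.mk_eq_zero K).mpr hz
    rw [hK₂, Submodule.mem_comap, this]
    exact C₂.zero_mem
  have hmapK₂ : K₂.map K.mkQ = C₂ :=
    Submodule.map_comap_eq_of_surjective (Submodule.mkQ_surjective K) C₂
  set φ : ↥P →ₗ[A] ((ι →₀ M) ⧸ K) ⧸ C₂ := C₂.mkQ.comp P.subtype with hφ
  have hkerφ : LinearMap.ker φ = C₁ := by
    ext z
    constructor
    · intro hz
      have h1 : (z : (ι →₀ M) ⧸ K) ∈ C₂ := by
        have := LinearMap.mem_ker.mp hz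
        rw [hφ] at this
        simpa [Submodule.Quotient.mk_eq_zero] using this
      obtain ⟨w, hw, hww⟩ := Submodule.mem_map.mp h1
      have : w = z := Subtype.ext hww
      exact this ▸ hw
    · intro hz
      apply LinearMap.mem_ker.mpr
      rw [hφ]
      have : (z : (ι →₀ M) ⧸ K) ∈ C₂ := Submodule.mem_map_of_mem hz
      simpa [Submodule.Quotient.mk_eq_zero] using this
  let e₁ : (N ⧸ C) ≃ₗ[A] (↥P ⧸ C₁) := Submodule.Quotient.equiv C C₁ e rfl
  let e₂ : (↥P ⧸ C₁) ≃ₗ[A] ↥(LinearMap.range φ) :=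
    (Submodule.quotEquivOfEq C₁ (LinearMap.ker φ) hkerφ.symm).trans φ.quotKerEquivRange
  let e₃ : (((ι →₀ M) ⧸ K) ⧸ C₂) ≃ₗ[A] ((ι →₀ M) ⧸ K₂) :=
    (Submodule.quotEquivOfEq C₂ (K₂.map K.mkQ) hmapK₂.symm).trans
      (Submodule.quotientQuotientEquivQuotient K K₂ hKK₂)
  exact ⟨ι, K₂, _, ⟨(e₁.trans e₂).trans (e₃.submoduleMap (LinearMap.range φ))⟩⟩

/-- Key step: the cyclic submodule generated by an element of the radical is semisimple. -/
lemma aux_key {M N : Type v} [AddCommGroup M] [Module A M] [AddCommGroup N] [Module A N]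
    (hM : IsAlmostVModule A M) (hN : InSigma A M N) (x : N) (hx : x ∈ modRad A N) :
    IsSemisimpleModule A ↥(Submodule.span A {x}) := by
  by_contra hns
  obtain ⟨C, hC⟩ := aux_exists_maximal_disjoint (Submodule.span A {x})
  set q : N →ₗ[A] N ⧸ C := C.mkQ with hq
  have hqs : Function.Surjective q := Submodule.mkQ_surjective C
  set xb : N ⧸ C := q x with hxbdef
  have hxb : xb ∈ modRad A (N ⧸ C) := aux_modRad_map q hqs hx
  set Xb : Submodule A (N ⧸ C) := Submodule.span A {xb} with hXbdef
  have hmapX : (Submodule.span A {x}).map q = Xb := by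
    rw [Submodule.map_span, Set.image_singleton]
  have hinj : ∀ b ∈ Submodule.span A {x}, q b = 0 → b = 0 := by
    intro b hb hb0
    have hbC : b ∈ C := by
      rw [hq] at hb0
      simpa [Submodule.Quotient.mk_eq_zero] using hb0
    have : b ∈ C ⊓ Submodule.span A {x} := ⟨hbC, hb⟩
    rw [hC.1] at this
    exact this
  set ψ : ↥(Submodule.span A {x}) →ₗ[A] N ⧸ C := q.comp (Submodule.span A {x}).subtype
    with hψ
  have hψinj : Function.Injective ψ := by
    rw [← LinearMap.ker_eq_bot]
    rw [eq_bot_iff]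
    intro z hz
    have : (z : N) = 0 := hinj z z.2 (LinearMap.mem_ker.mp hz)
    simpa [Submodule.mem_bot] using Subtype.ext this
  have hψrange : LinearMap.range ψ = Xb := by
    rw [hψ, LinearMap.range_comp, Submodule.range_subtype, hmapX]
  let eX : ↥(Submodule.span A {x}) ≃ₗ[A] ↥Xb :=
    (LinearEquiv.ofInjective ψ hψinj).trans (LinearEquiv.ofEq _ _ hψrange)
  have hns' : ¬ IsSemisimpleModule A ↥Xb := by
    intro hss
    haveI := hss
    exact hns (IsSemisimpleModule.congr eX)
  have hxbXb : xb ∈ Xb := Submodule.mem_span_singleton_self xb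
  set xg : ↥Xb := ⟨xb, hxbXb⟩ with hxg
  have hgen : Submodule.span A {xg} = ⊤ := by
    apply Submodule.map_injective_of_injective (Submodule.injective_subtype Xb)
    rw [Submodule.map_span, Set.image_singleton, Submodule.map_top, Submodule.range_subtype]
    rfl
  obtain ⟨L', hxgL', hcoat', hess'⟩ := aux_bad_coatom xg hgen hns'
  set L : Submodule A (N ⧸ C) := L'.map Xb.subtype with hLdef
  have hXbess : ∀ Kq : Submodule A (N ⧸ C), Kq ≠ ⊥ → Xb ⊓ Kq ≠ ⊥ := by
    intro Kq hKq
    obtain ⟨k, hkK, hk0⟩ := (Submodule.ne_bot_iff Kq).mp hKq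
    have hD : ¬ ((Kq.comap q) ⊓ Submodule.span A {x} = ⊥) := by
      intro hbot
      have h1 : C ≤ Kq.comap q := by
        intro z hz
        have hz0 : q z = 0 := by
          rw [hq]; simpa [Submodule.Quotient.mk_eq_zero] using hz
        rw [Submodule.mem_comap, hz0]
        exact Kq.zero_mem
      have h2 : Kq.comap q ≤ C := hC.2 hbot h1
      obtain ⟨a, rfl⟩ := hqs k
      have haC : a ∈ C := h2 hkK
      apply hk0
      rw [hq]
      simpa [Submodule.Quotient.mk_eq_zero] using haC
    obtain ⟨b, hbmem, hb0⟩ := (Submodule.ne_bot_iff _).mp hD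
    have hbspan : b ∈ Submodule.span A {x} := hbmem.2
    have hqb0 : q b ≠ 0 := fun hh => hb0 (hinj b hbspan hh)
    apply (Submodule.ne_bot_iff _).mpr
    exact ⟨q b, ⟨hmapX ▸ Submodule.mem_map_of_mem hbspan, hbmem.1⟩, hqb0⟩
  have hLess : ∀ Kq : Submodule A (N ⧸ C), Kq ≠ ⊥ → L ⊓ Kq ≠ ⊥ := by
    intro Kq hKq
    obtain ⟨b, hbmem, hb0⟩ := (Submodule.ne_bot_iff _).mp (hXbess Kq hKq)
    have hK'ne : (Xb ⊓ Kq).comap Xb.subtype ≠ ⊥ := by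
      apply (Submodule.ne_bot_iff _).mpr
      refine ⟨⟨b, hbmem.1⟩, hbmem, ?_⟩
      intro hh
      exact hb0 (congrArg Subtype.val hh)
    obtain ⟨z, hzmem, hz0⟩ := (Submodule.ne_bot_iff _).mp (hess' _ hK'ne)
    apply (Submodule.ne_bot_iff _).mpr
    refine ⟨(z : N ⧸ C), ⟨Submodule.mem_map_of_mem hzmem.1,
      (Submodule.mem_comap.mp hzmem.2).2⟩, ?_⟩
    intro hh
    exact hz0 (Subtype.ext hh)
  have hL'top : L' ≠ ⊤ := fun hh => hxgL' (hh ▸ Submodule.mem_top)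
  have hcoatom : IsCoatom L' := ⟨hL'top, hcoat'⟩
  have hS : IsSimpleModule A (↥Xb ⧸ L') := isSimpleModule_iff_isCoatom.mpr hcoatom
  have hQσ : InSigma A M (N ⧸ C) := aux_inSigma_quotient hN C
  rcases hM (↥Xb ⧸ L') hS (N ⧸ C) hQσ Xb L'.mkQ with
    ⟨g, hg⟩ | ⟨π, hidem, hπ0, h, hcomm⟩
  · -- Case 1: the map extends; contradiction with `x` in the radical.
    have hgx : g xb = L'.mkQ xg := hg xg
    have hgx0 : g xb ≠ 0 := by
      rw [hgx]
      intro h0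
      exact hxgL' ((Submodule.Quotient.mk_eq_zero L').mp (by simpa using h0))
    have hker : IsCoatom (LinearMap.ker g) := by
      constructor
      · intro htop
        have : xb ∈ LinearMap.ker g := htop ▸ Submodule.mem_top
        exact hgx0 (LinearMap.mem_ker.mp this)
      · intro P' hP'
        obtain ⟨a, haP, hag⟩ := SetLike.exists_of_lt hP'
        have hga : g a ≠ 0 := fun hh => hag (LinearMap.mem_ker.mpr hh)
        rw [Submodule.eq_top_iff']
        intro b
        have hspan : Submodule.span A {g a} = ⊤ := by
          rcases eq_bot_or_eq_top (Submodule.span A {g a}) with hb | ht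
          · exfalso
            apply hga
            have := hb ▸ Submodule.mem_span_singleton_self (g a)
            simpa [Submodule.mem_bot] using this
          · exact ht
        have hgb : g b ∈ Submodule.span A {g a} := hspan ▸ Submodule.mem_top
        obtain ⟨r, hr⟩ := Submodule.mem_span_singleton.mp hgb
        have hmem : b - r • a ∈ LinearMap.ker g := by
          rw [LinearMap.mem_ker, map_sub, map_smul, hr, sub_self]
        have h1 : b - r • a ∈ P' := hP'.le hmem
        have h2 : r • a ∈ P' := P'.smul_mem r haP
        simpa using P'.add_mem h1 h2
    have : xb ∈ LinearMap.ker g := Submodule.mem_sInf.mp hxb _ hker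
    exact hgx0 (LinearMap.mem_ker.mp this)
  · -- Case 2: contradiction with essentiality of `L`.
    have hrange : LinearMap.range π ≠ ⊥ := by
      intro hr
      exact hπ0 (LinearMap.range_eq_bot.mp hr)
    have hLker : ∀ y ∈ L, π y = 0 := by
      rintro y ⟨z, hz, rfl⟩
      have hc := hcomm z
      have hz0 : L'.mkQ z = 0 := (Submodule.Quotient.mk_eq_zero L').mpr hz
      rw [hz0, map_zero] at hc
      simpa using hc.symm
    obtain ⟨y, hymem, hy0⟩ := (Submodule.ne_bot_iff _).mp (hLess _ hrange)
    obtain ⟨w, hw⟩ := hymem.2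
    have h1 : π y = 0 := hLker y hymem.1
    have h2 : π y = y := by
      rw [← hw]
      calc π (π w) = (π * π) w := rfl
        _ = π w := by rw [hidem]
    exact hy0 (h2.symm.trans h1)

end Aux

/-- Proposition 2.2 (1): if `M` is an almost `V`-module then the Jacobson radical of every
module in `σ(M)` is semisimple. -/
theorem almostVModule_rad_semisimple (R : Type u) [Ring R] (M : Type v) [AddCommGroup M]
    [Module Rᵐᵒᵖ M] (hM : IsAlmostVModule Rᵐᵒᵖ M) :
    ∀ (N : Type v) [AddCommGroup N] [Module Rᵐᵒᵖ N], InSigma Rᵐᵒᵖ M N →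
      IsSemisimpleModule Rᵐᵒᵖ ↥(modRad Rᵐᵒᵖ N) := by
  intro N _ _ hN
  apply isSemisimpleModule_of_isSemisimpleModule_submodule'
    (p := fun y : ↥(modRad Rᵐᵒᵖ N) => Submodule.span Rᵐᵒᵖ {y})
  · intro y
    have hkey := aux_key hM hN (y : N) y.2
    haveI := hkey
    have hmap : (Submodule.span Rᵐᵒᵖ {y}).map (modRad Rᵐᵒᵖ N).subtype
        = Submodule.span Rᵐᵒᵖ {(y : N)} := by
      rw [Submodule.map_span, Set.image_singleton]
      rfl
    let e : ↥(Submodule.span Rᵐᵒᵖ {y}) ≃ₗ[Rᵐᵒᵖ] ↥(Submodule.span Rᵐᵒᵖ {(y : N)}) :=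
      (Submodule.equivMapOfInjective (modRad Rᵐᵒᵖ N).subtype
        (Submodule.injective_subtype _) (Submodule.span Rᵐᵒᵖ {y})).trans
        (LinearEquiv.ofEq _ _ hmap)
    exact IsSemisimpleModule.congr e
  · rw [Submodule.eq_top_iff']
    intro z
    exact Submodule.mem_iSup_of_mem z (Submodule.mem_span_singleton_self z)
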